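/- In a weak Hopf algebra H, the target space H_t = ε_t(H) and the source space H_s = ε_s(H) commute elementwise: yz = zy for all y ∈ H_s and z ∈ H_t. -/

import Mathlib

open TensorProduct LinearMap

/-- A weak Hopf algebra over a commutative ring `k`: a `k`-algebra `H` equipped with a
coassociative counital comultiplication which is multiplicative, satisfying the weak
comultiplication axiom `Δ²(1) = (Δ(1)⊗1)(1⊗Δ(1)) = (1⊗Δ(1))(Δ(1)⊗1)`, the weak counit axiom
`ε(xyz) = ε(xy₁)ε(y₂z) = ε(xy₂)ε(y₁z)`, and an antipode satisfying
`h₁S(h₂) = ε(1₁h)1₂`, `S(h₁)h₂ = 1₁ε(h1₂)` and `S(h₁)h₂S(h₃) = S(h)`. -/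
structure WeakHopfAlgebra (k H : Type*) [CommRing k] [Ring H] [Algebra k H] where
  comul : H →ₗ[k] H ⊗[k] H
  counit : H →ₗ[k] k
  antipode : H →ₗ[k] H
  comul_coassoc : (TensorProduct.assoc k H H H).toLinearMap ∘ₗ
      (LinearMap.rTensor H comul) ∘ₗ comul = (LinearMap.lTensor H comul) ∘ₗ comul
  counit_comul : (TensorProduct.lid k H).toLinearMap ∘ₗ
      (LinearMap.rTensor H counit) ∘ₗ comul = LinearMap.id
  comul_counit : (TensorProduct.rid k H).toLinearMap ∘ₗ
      (LinearMap.lTensor H counit) ∘ₗ comul = LinearMap.id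
  comul_mul : ∀ x y : H, comul (x * y) = comul x * comul y
  comul_one_left : (LinearMap.rTensor H comul) (comul 1)
      = (comul 1 ⊗ₜ[k] (1 : H)) * ((TensorProduct.assoc k H H H).symm ((1 : H) ⊗ₜ[k] comul 1))
  comul_one_right : (LinearMap.rTensor H comul) (comul 1)
      = ((TensorProduct.assoc k H H H).symm ((1 : H) ⊗ₜ[k] comul 1)) * (comul 1 ⊗ₜ[k] (1 : H))
  counit_mul_left : ∀ x y z : H, counit (x * y * z)
      = LinearMap.mul' k k ((TensorProduct.map (counit ∘ₗ LinearMap.mulLeft k x)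
          (counit ∘ₗ LinearMap.mulRight k z)) (comul y))
  counit_mul_right : ∀ x y z : H, counit (x * y * z)
      = LinearMap.mul' k k ((TensorProduct.map (counit ∘ₗ LinearMap.mulRight k z)
          (counit ∘ₗ LinearMap.mulLeft k x)) (comul y))
  antipode_right : ∀ h : H,
      LinearMap.mul' k H ((LinearMap.lTensor H antipode) (comul h))
        = (TensorProduct.lid k H) ((LinearMap.rTensor H
            (counit ∘ₗ LinearMap.mulRight k h)) (comul 1))
  antipode_left : ∀ h : H,
      LinearMap.mul' k H ((LinearMap.rTensor H antipode) (comul h))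
        = (TensorProduct.rid k H) ((LinearMap.lTensor H
            (counit ∘ₗ LinearMap.mulLeft k h)) (comul 1))
  antipode_mid : ∀ h : H,
      LinearMap.mul' k H ((TensorProduct.map
          (LinearMap.mul' k H ∘ₗ LinearMap.rTensor H antipode) antipode)
            ((LinearMap.rTensor H comul) (comul h))) = antipode h

namespace WeakHopfAlgebra

variable {k H : Type*} [CommRing k] [Ring H] [Algebra k H]

/-- The target map `ε_t(h) = ε(1₁h)1₂`. -/
noncomputable def εt (W : WeakHopfAlgebra k H) : H →ₗ[k] H :=
  (TensorProduct.lid k H).toLinearMap ∘ₗ (LinearMap.rTensor H W.counit) ∘ₗ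
    (LinearMap.mulLeft k (W.comul 1)) ∘ₗ ((TensorProduct.mk k H H).flip 1)

/-- The source map `ε_s(h) = 1₁ε(h1₂)`. -/
noncomputable def εs (W : WeakHopfAlgebra k H) : H →ₗ[k] H :=
  (TensorProduct.rid k H).toLinearMap ∘ₗ (LinearMap.lTensor H W.counit) ∘ₗ
    (LinearMap.mulRight k (W.comul 1)) ∘ₗ ((TensorProduct.mk k H H) 1)

end WeakHopfAlgebra

/-- In a weak Hopf algebra `H`, the target space `H_t = ε_t(H)` and the source space
`H_s = ε_s(H)` commute elementwise: `yz = zy` for all `y ∈ H_s`, `z ∈ H_t`. -/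
theorem weakHopf_source_target_commute {k H : Type*} [CommRing k] [Ring H] [Algebra k H]
    (W : WeakHopfAlgebra k H) (y z : H)
    (hy : y ∈ Set.range W.εs) (hz : z ∈ Set.range W.εt) :
    y * z = z * y := by
  obtain ⟨g, rfl⟩ := hy
  obtain ⟨h, rfl⟩ := hz
  set ε := W.counit with hε
  let G : H ⊗[k] H →ₗ[k] H :=
    (TensorProduct.lid k H).toLinearMap ∘ₗ rTensor H (ε ∘ₗ mulRight k h)
  let G' : H ⊗[k] H →ₗ[k] H :=
    (TensorProduct.rid k H).toLinearMap ∘ₗ lTensor H (ε ∘ₗ mulLeft k g)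
  let F : (H ⊗[k] H) ⊗[k] H →ₗ[k] H :=
    G ∘ₗ (TensorProduct.rid k (H ⊗[k] H)).toLinearMap ∘ₗ
      lTensor (H ⊗[k] H) (ε ∘ₗ mulLeft k g)
  have key1 : ∀ u v : H ⊗[k] H,
      F ((u ⊗ₜ[k] (1:H)) * ((TensorProduct.assoc k H H H).symm ((1:H) ⊗ₜ[k] v)))
        = G u * G' v := by
    intro u v
    induction u using TensorProduct.induction_on with
    | zero => simp
    | tmul a b =>
      induction v using TensorProduct.induction_on with
      | zero => simp
      | tmul c d =>
        have : (TensorProduct.assoc k H H H).symm ((1:H) ⊗ₜ[k] (c ⊗ₜ[k] d))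
            = ((1:H) ⊗ₜ[k] c) ⊗ₜ[k] d := rfl
        rw [this]
        simp only [F, G, G', Algebra.TensorProduct.tmul_mul_tmul, lTensor_tmul, rTensor_tmul,
          coe_comp, Function.comp_apply, LinearEquiv.coe_coe, mulLeft_apply, mulRight_apply,
          one_mul, mul_one, TensorProduct.rid_tmul, TensorProduct.lid_tmul, map_smul, smul_smul,
          smul_mul_assoc, mul_smul_comm]
      | add v1 v2 iv1 iv2 =>
        simp only [tmul_add, map_add, mul_add] at *
        rw [iv1, iv2]
    | add u1 u2 iu1 iu2 =>
      simp only [add_tmul, map_add, add_mul] at *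
      rw [iu1, iu2]
  have key2 : ∀ u v : H ⊗[k] H,
      F (((TensorProduct.assoc k H H H).symm ((1:H) ⊗ₜ[k] v)) * (u ⊗ₜ[k] (1:H)))
        = G' v * G u := by
    intro u v
    induction u using TensorProduct.induction_on with
    | zero => simp
    | tmul a b =>
      induction v using TensorProduct.induction_on with
      | zero => simp
      | tmul c d =>
        have : (TensorProduct.assoc k H H H).symm ((1:H) ⊗ₜ[k] (c ⊗ₜ[k] d))
            = ((1:H) ⊗ₜ[k] c) ⊗ₜ[k] d := rfl
        rw [this]
        simp only [F, G, G', Algebra.TensorProduct.tmul_mul_tmul, lTensor_tmul, rTensor_tmul,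
          coe_comp, Function.comp_apply, LinearEquiv.coe_coe, mulLeft_apply, mulRight_apply,
          one_mul, mul_one, TensorProduct.rid_tmul, TensorProduct.lid_tmul, map_smul, smul_smul,
          smul_mul_assoc, mul_smul_comm]
        rw [mul_comm (ε (g * d)) (ε (a * h))]
      | add v1 v2 iv1 iv2 =>
        simp only [tmul_add, map_add, add_mul] at *
        rw [iv1, iv2]
    | add u1 u2 iu1 iu2 =>
      simp only [add_tmul, map_add, mul_add] at *
      rw [iu1, iu2]
  have hG : ∀ u : H ⊗[k] H,
      (TensorProduct.lid k H) (rTensor H ε (u * (h ⊗ₜ[k] (1:H)))) = G u := by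
    intro u
    induction u using TensorProduct.induction_on with
    | zero => simp
    | tmul a b =>
      simp [G, Algebra.TensorProduct.tmul_mul_tmul]
    | add u1 u2 iu1 iu2 =>
      simp only [add_mul, map_add] at *
      rw [iu1, iu2]
  have hG' : ∀ u : H ⊗[k] H,
      (TensorProduct.rid k H) (lTensor H ε (((1:H) ⊗ₜ[k] g) * u)) = G' u := by
    intro u
    induction u using TensorProduct.induction_on with
    | zero => simp
    | tmul a b =>
      simp [G', Algebra.TensorProduct.tmul_mul_tmul]
    | add u1 u2 iu1 iu2 =>
      simp only [mul_add, map_add] at *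
      rw [iu1, iu2]
  have ht : W.εt h = G (W.comul 1) := by
    simpa [WeakHopfAlgebra.εt, mulLeft_apply] using hG (W.comul 1)
  have hs : W.εs g = G' (W.comul 1) := by
    simpa [WeakHopfAlgebra.εs, mulRight_apply] using hG' (W.comul 1)
  rw [ht, hs, ← key1 (W.comul 1) (W.comul 1), ← key2 (W.comul 1) (W.comul 1),
    ← W.comul_one_left, ← W.comul_one_right]
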